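/- Let p and ℓ be distinct primes, and write ℓ = ω·r^{p^n} in ℤ_p^× where ω is a torsion unit (ω^{p−1} = 1 if p is odd, ω ∈ {±1} if p = 2), n is a natural number, and r is a topological generator of U_1. Then the image of the evaluation homomorphism ψ ↦ ψ(ℓ), from the group of continuous group homomorphisms ℤ_p^× → (ℤ_p, +) to ℤ_p, is exactly the subgroup p^n·ℤ_p; in particular, the cokernel of this evaluation homomorphism is cyclic of order p^n. -/

import Mathlib

/-- For a prime `p`, the subgroup `U₁` of `ℤ_[p]ˣ` of units congruent to `1` modulo `p`
(if `p` is odd) or modulo `4` (if `p = 2`), defined as the kernel of the reduction map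
`ℤ_[p]ˣ → (ZMod (p ^ k))ˣ` with `k = 2` if `p = 2` and `k = 1` otherwise. -/
noncomputable def U1 (p : ℕ) [Fact p.Prime] : Subgroup ℤ_[p]ˣ :=
  (Units.map ((PadicInt.toZModPow (if p = 2 then 2 else 1) :
    ℤ_[p] →+* ZMod (p ^ (if p = 2 then 2 else 1))) :
    ℤ_[p] →* ZMod (p ^ (if p = 2 then 2 else 1)))).ker


namespace Stmt10Aux

variable {p : ℕ} [hp : Fact p.Prime]

noncomputable def Cb (p : ℕ) : ℝ := ((p : ℝ)⁻¹) ^ (if p = 2 then 2 else 1)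


lemma Cb_def (p : ℕ) : Cb p = ((p : ℝ)⁻¹) ^ (if p = 2 then 2 else 1) := rfl

lemma norm_add_eq {x y : ℤ_[p]} (h : ‖y‖ < ‖x‖) : ‖x + y‖ = ‖x‖ := by
  by_contra hne
  have h1 : ‖x + y‖ ≤ ‖x‖ := (PadicInt.nonarchimedean x y).trans (max_le le_rfl h.le)
  have h3 : ‖x‖ ≤ max ‖x + y‖ ‖y‖ := by
    have := PadicInt.nonarchimedean (x + y) (-y)
    simpa using this
  rcases max_cases ‖x + y‖ ‖y‖ with ⟨he, _⟩ | ⟨he, _⟩ <;> rw [he] at h3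
  · exact hne (le_antisymm h1 h3)
  · exact absurd (lt_of_le_of_lt h3 h) (lt_irrefl _)

lemma norm_sum_le {ι : Type*} (s : Finset ι) (f : ι → ℤ_[p]) (B : ℝ) (hB : 0 ≤ B)
    (h : ∀ i ∈ s, ‖f i‖ ≤ B) : ‖∑ i ∈ s, f i‖ ≤ B := by
  classical
  induction s using Finset.induction with
  | empty => simpa using hB
  | insert _ _ hx ih =>
    rw [Finset.sum_insert hx]
    refine (PadicInt.nonarchimedean _ _).trans (max_le (h _ (Finset.mem_insert_self _ _)) ?_)
    exact ih fun i hi => h i (Finset.mem_insert_of_mem hi)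

lemma pinv_pos : (0:ℝ) < (p:ℝ)⁻¹ := by
  have := hp.1.pos; positivity

lemma pinv_lt_one : (p:ℝ)⁻¹ < 1 := by
  rw [inv_lt_one_iff₀]; right; exact_mod_cast hp.1.one_lt

lemma Cb_le_pinv : Cb p ≤ (p:ℝ)⁻¹ := by
  unfold Cb
  split
  · calc ((p:ℝ)⁻¹)^2 = (p:ℝ)⁻¹ * (p:ℝ)⁻¹ := sq _
    _ ≤ 1 * (p:ℝ)⁻¹ := by
        gcongr
        exact pinv_lt_one.le
    _ = (p:ℝ)⁻¹ := one_mul _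
  · rw [pow_one]

lemma Cb_lt_one : Cb p < 1 := Cb_le_pinv.trans_lt pinv_lt_one

lemma Cb_pos : 0 < Cb p := pow_pos pinv_pos _

lemma binom_expand (x : ℤ_[p]) :
    (1 + x) ^ p = 1 + p * x + ∑ j ∈ Finset.Ico 2 (p + 1), x ^ j * (p.choose j : ℤ_[p]) := by
  have h := add_pow x 1 p
  rw [Finset.range_eq_Ico] at h
  rw [Finset.sum_eq_sum_Ico_succ_bot (Nat.succ_pos p)] at h
  rw [Finset.sum_eq_sum_Ico_succ_bot (show 0 + 1 < p + 1 by have := hp.1.two_le; omega)] at h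
  norm_num at h
  rw [add_comm x 1] at h
  rw [h]; ring



lemma norm_pow_p_sub_one {x : ℤ_[p]} (hx : ‖x‖ ≤ Cb p) :
    ‖(1 + x) ^ p - 1‖ = (p : ℝ)⁻¹ * ‖x‖ := by
  rcases eq_or_ne x 0 with rfl | hx0
  · simp
  have hxpos : 0 < ‖x‖ := norm_pos_iff.mpr hx0
  have hx1 : ‖x‖ < 1 := lt_of_le_of_lt hx Cb_lt_one
  have hxp : ‖x‖ ≤ (p:ℝ)⁻¹ := hx.trans Cb_le_pinv
  have hpx : ‖(p : ℤ_[p]) * x‖ = (p:ℝ)⁻¹ * ‖x‖ := by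
    rw [norm_mul, PadicInt.norm_p]
  rcases eq_or_ne p 2 with hp2 | hp2
  · subst hp2
    have hx4 : ‖x‖ ≤ ((2:ℝ)⁻¹)^2 := by simpa [Cb] using hx
    have key : (1 + x) ^ 2 - 1 = ((2:ℕ) : ℤ_[2]) * x + x ^ 2 := by push_cast; ring
    have hlt : ‖x ^ 2‖ < ‖((2:ℕ) : ℤ_[2]) * x‖ := by
      rw [hpx, norm_pow]
      calc ‖x‖^2 = ‖x‖ * ‖x‖ := sq _
      _ ≤ ((2:ℝ)⁻¹)^2 * ‖x‖ := by gcongr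
      _ < ((2:ℕ):ℝ)⁻¹ * ‖x‖ := by
          apply mul_lt_mul_of_pos_right _ hxpos
          norm_num
    rw [key, norm_add_eq hlt, hpx]
  · -- p odd
    have hp3 : 3 ≤ p := by
      have h2 := hp.1.two_le
      omega
    have key : (1 + x) ^ p - 1 =
        (p : ℤ_[p]) * x + ∑ j ∈ Finset.Ico 2 (p + 1), x ^ j * (p.choose j : ℤ_[p]) := by
      rw [binom_expand]; ring
    have hB : ‖∑ j ∈ Finset.Ico 2 (p + 1), x ^ j * (p.choose j : ℤ_[p])‖
        ≤ (p:ℝ)⁻¹ * (‖x‖ * ‖x‖) := by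
      apply norm_sum_le
      · positivity
      intro j hj
      rw [Finset.mem_Ico] at hj
      obtain ⟨hj2, hjp⟩ := hj
      rw [norm_mul, norm_pow]
      rcases eq_or_lt_of_le (Nat.lt_succ_iff.mp hjp) with hjeq | hjlt
      · -- j = p
        rw [hjeq, Nat.choose_self]
        have hsplit : ‖x‖ ^ p = ‖x‖ ^ 2 * ‖x‖ ^ (p - 2) := by
          rw [← pow_add]
          congr 1
          omega
        rw [hsplit]
        have h1 : ‖x‖ ^ (p-2) ≤ (p:ℝ)⁻¹ := by
          calc ‖x‖ ^ (p-2) ≤ ‖x‖ ^ 1 := by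
                apply pow_le_pow_of_le_one hxpos.le hx1.le
                omega
          _ = ‖x‖ := pow_one _
          _ ≤ (p:ℝ)⁻¹ := hxp
        calc ‖x‖^2 * ‖x‖^(p-2) * ‖((1:ℕ) : ℤ_[p])‖ = ‖x‖^(p-2) * (‖x‖ * ‖x‖) := by
              push_cast
              rw [norm_one, mul_one, sq]
              ring
        _ ≤ (p:ℝ)⁻¹ * (‖x‖ * ‖x‖) := by
              apply mul_le_mul_of_nonneg_right h1 (by positivity)
      · -- 2 ≤ j < p
        have hdvd : p ∣ p.choose j := Nat.Prime.dvd_choose_self hp.1 (by omega) hjlt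
        obtain ⟨m, hm⟩ := hdvd
        have hnc : ‖(p.choose j : ℤ_[p])‖ ≤ (p:ℝ)⁻¹ := by
          rw [hm]
          push_cast
          rw [norm_mul, PadicInt.norm_p]
          calc (p:ℝ)⁻¹ * ‖(m : ℤ_[p])‖ ≤ (p:ℝ)⁻¹ * 1 :=
                mul_le_mul_of_nonneg_left (PadicInt.norm_le_one _) pinv_pos.le
          _ = (p:ℝ)⁻¹ := mul_one _
        have hxj : ‖x‖ ^ j ≤ ‖x‖ * ‖x‖ := by
          rw [← sq]
          exact pow_le_pow_of_le_one hxpos.le hx1.le hj2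
        calc ‖x‖^j * ‖(p.choose j : ℤ_[p])‖ ≤ (‖x‖ * ‖x‖) * (p:ℝ)⁻¹ := by
              apply mul_le_mul hxj hnc (norm_nonneg _) (by positivity)
        _ = (p:ℝ)⁻¹ * (‖x‖ * ‖x‖) := by ring
    have hD : ‖∑ j ∈ Finset.Ico 2 (p + 1), x ^ j * (p.choose j : ℤ_[p])‖
        < ‖(p : ℤ_[p]) * x‖ := by
      refine lt_of_le_of_lt hB ?_
      rw [hpx]
      have h2 : ‖x‖ * ‖x‖ < 1 * ‖x‖ := mul_lt_mul_of_pos_right hx1 hxpos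
      rw [one_mul] at h2
      exact mul_lt_mul_of_pos_left h2 pinv_pos
    rw [key, norm_add_eq hD, hpx]

lemma norm_natCast_coprime {j : ℕ} (hj : ¬ p ∣ j) : ‖(j : ℤ_[p])‖ = 1 := by
  refine le_antisymm (PadicInt.norm_le_one _) ?_
  by_contra h
  push_neg at h
  have : ‖((j:ℤ) : ℤ_[p])‖ < 1 := by push_cast; exact h
  rw [PadicInt.norm_int_lt_one_iff_dvd] at this
  exact hj (by exact_mod_cast this)

lemma binom_expand2 (x : ℤ_[p]) (j : ℕ) (hj : 1 ≤ j) :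
    (1 + x) ^ j = 1 + j * x + ∑ i ∈ Finset.Ico 2 (j + 1), x ^ i * (j.choose i : ℤ_[p]) := by
  have h := add_pow x 1 j
  rw [Finset.range_eq_Ico] at h
  rw [Finset.sum_eq_sum_Ico_succ_bot (Nat.succ_pos j)] at h
  rw [Finset.sum_eq_sum_Ico_succ_bot (show 0 + 1 < j + 1 by omega)] at h
  norm_num at h
  rw [add_comm x 1] at h
  rw [h]; ring

lemma norm_pow_coprime_sub_one {x : ℤ_[p]} (hx : ‖x‖ < 1) {j : ℕ} (hj : ¬ p ∣ j) :
    ‖(1 + x) ^ j - 1‖ = ‖x‖ := by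
  rcases eq_or_ne x 0 with rfl | hx0
  · simp
  have hxpos : 0 < ‖x‖ := norm_pos_iff.mpr hx0
  have hj1 : 1 ≤ j := by
    rcases Nat.eq_zero_or_pos j with rfl | h
    · exact absurd (dvd_zero p) hj
    · exact h
  have hjx : ‖(j : ℤ_[p]) * x‖ = ‖x‖ := by
    rw [norm_mul, norm_natCast_coprime hj, one_mul]
  have key : (1 + x) ^ j - 1 =
      (j : ℤ_[p]) * x + ∑ i ∈ Finset.Ico 2 (j + 1), x ^ i * (j.choose i : ℤ_[p]) := by
    rw [binom_expand2 x j hj1]; ring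
  have hE : ‖∑ i ∈ Finset.Ico 2 (j + 1), x ^ i * (j.choose i : ℤ_[p])‖ < ‖(j : ℤ_[p]) * x‖ := by
    rw [hjx]
    refine lt_of_le_of_lt (norm_sum_le _ _ (‖x‖ * ‖x‖) (by positivity) ?_) ?_
    · intro i hi
      rw [Finset.mem_Ico] at hi
      rw [norm_mul, norm_pow]
      calc ‖x‖ ^ i * ‖(j.choose i : ℤ_[p])‖ ≤ ‖x‖ ^ i * 1 :=
            mul_le_mul_of_nonneg_left (PadicInt.norm_le_one _) (by positivity)
      _ = ‖x‖ ^ i := mul_one _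
      _ ≤ ‖x‖ ^ 2 := pow_le_pow_of_le_one hxpos.le hx.le hi.1
      _ = ‖x‖ * ‖x‖ := sq _
    · have h2 : ‖x‖ * ‖x‖ < 1 * ‖x‖ := mul_lt_mul_of_pos_right hx hxpos
      rwa [one_mul] at h2
  rw [key, norm_add_eq hE, hjx]

lemma norm_pow_sub_one (k : ℕ) {u : ℤ_[p]} (hu : ‖u - 1‖ ≤ Cb p) :
    ‖u ^ k - 1‖ = ‖(k : ℤ_[p])‖ * ‖u - 1‖ := by
  induction k using Nat.strong_induction_on generalizing u with
  | _ k ih =>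
    rcases eq_or_ne k 0 with rfl | hk0
    · simp
    by_cases hdvd : p ∣ k
    · obtain ⟨m, rfl⟩ := hdvd
      have hm : m < p * m := by
        have := hp.1.two_le
        have hm0 : m ≠ 0 := by rintro rfl; simp at hk0
        have h2 := hp.1.two_le
        have := Nat.pos_of_ne_zero hm0
        nlinarith
      have hup : ‖u ^ p - 1‖ = (p:ℝ)⁻¹ * ‖u - 1‖ := by
        have := norm_pow_p_sub_one (x := u - 1) hu
        simpa [add_sub_cancel] using this
      have hup' : ‖u ^ p - 1‖ ≤ Cb p := by
        rw [hup]
        calc (p:ℝ)⁻¹ * ‖u - 1‖ ≤ 1 * ‖u - 1‖ :=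
              mul_le_mul_of_nonneg_right pinv_lt_one.le (norm_nonneg _)
        _ = ‖u - 1‖ := one_mul _
        _ ≤ Cb p := hu
      have := ih m hm hup'
      rw [pow_mul]
      rw [this, hup]
      push_cast
      rw [norm_mul, PadicInt.norm_p]
      ring
    · have := norm_pow_coprime_sub_one (x := u - 1) (lt_of_le_of_lt hu Cb_lt_one) hdvd
      rw [norm_natCast_coprime hdvd, one_mul]
      simpa [add_sub_cancel] using this

lemma norm_zpow_sub_one (u : ℤ_[p]ˣ) (hu : ‖(u : ℤ_[p]) - 1‖ ≤ Cb p) (k : ℤ) :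
    ‖((u ^ k : ℤ_[p]ˣ) : ℤ_[p]) - 1‖ = ‖(k : ℤ_[p])‖ * ‖(u : ℤ_[p]) - 1‖ := by
  have hnat : ∀ m : ℕ, ‖((u ^ m : ℤ_[p]ˣ) : ℤ_[p]) - 1‖ = ‖(m : ℤ_[p])‖ * ‖(u : ℤ_[p]) - 1‖ := by
    intro m
    rw [Units.val_pow_eq_pow_val]
    exact norm_pow_sub_one m hu
  obtain ⟨m, rfl | rfl⟩ := Int.eq_nat_or_neg k
  · rw [zpow_natCast]
    rw [hnat m]
    norm_num
  · rw [zpow_neg, zpow_natCast]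
    have hinv : ((( (u ^ m)⁻¹ : ℤ_[p]ˣ) : ℤ_[p])) - 1 =
        (((u ^ m)⁻¹ : ℤ_[p]ˣ) : ℤ_[p]) * (1 - ((u ^ m : ℤ_[p]ˣ) : ℤ_[p])) := by
      have h := Units.inv_mul (u ^ m)
      have h' : (((u ^ m)⁻¹ : ℤ_[p]ˣ) : ℤ_[p]) * ((u ^ m : ℤ_[p]ˣ) : ℤ_[p]) = 1 := by
        exact_mod_cast h
      rw [mul_sub, h', mul_one]
    rw [hinv, norm_mul, PadicInt.norm_units, one_mul, norm_sub_rev]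
    rw [hnat m]
    norm_num

lemma mem_U1_iff (u : ℤ_[p]ˣ) :
    u ∈ U1 p ↔ PadicInt.toZModPow (if p = 2 then 2 else 1) (u : ℤ_[p]) = 1 := by
  rw [U1, MonoidHom.mem_ker]
  constructor
  · intro h
    have := congrArg Units.val h
    simpa using this
  · intro h
    ext
    simpa using h

lemma norm_sub_one_of_mem {u : ℤ_[p]ˣ} (h : u ∈ U1 p) : ‖(u : ℤ_[p]) - 1‖ ≤ Cb p := by
  rw [mem_U1_iff] at h
  have hker : ((u : ℤ_[p]) - 1) ∈ RingHom.ker (PadicInt.toZModPow (p := p)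
      (if p = 2 then 2 else 1)) := by
    rw [RingHom.mem_ker, map_sub, h, map_one, sub_self]
  rw [PadicInt.ker_toZModPow] at hker
  have := (PadicInt.norm_le_pow_iff_mem_span_pow ((u : ℤ_[p]) - 1)
    (if p = 2 then 2 else 1)).mpr hker
  refine this.trans ?_
  rw [Cb_def, zpow_neg, zpow_natCast, inv_pow]

lemma locally_const (m : ℕ) (x y : ℤ_[p]) (h : dist y x < (p:ℝ) ^ (-(m:ℤ))) :
    PadicInt.toZModPow m y = PadicInt.toZModPow m x := by
  have hle : ‖y - x‖ ≤ (p:ℝ) ^ (-(m:ℤ)) := by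
    rw [dist_eq_norm] at h
    exact h.le
  rw [PadicInt.norm_le_pow_iff_mem_span_pow, ← PadicInt.ker_toZModPow, RingHom.mem_ker,
    map_sub, sub_eq_zero] at hle
  exact hle

lemma one_add_pow_mem : ∃ v : ℤ_[p]ˣ, v ∈ U1 p ∧ (v : ℤ_[p]) = 1 + (p:ℤ_[p]) ^ (if p = 2 then 2 else 1) := by
  have hnorm : ‖(1 : ℤ_[p]) + (p:ℤ_[p]) ^ (if p = 2 then 2 else 1)‖ = 1 := by
    have h1 : ‖(p:ℤ_[p]) ^ (if p = 2 then 2 else 1)‖ < ‖(1:ℤ_[p])‖ := by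
      rw [norm_one, norm_pow, PadicInt.norm_p]
      apply pow_lt_one₀ (by positivity)
      · rw [inv_lt_one_iff₀]; right; exact_mod_cast hp.1.one_lt
      · split <;> omega
    calc ‖(1 : ℤ_[p]) + (p:ℤ_[p]) ^ (if p = 2 then 2 else 1)‖ = ‖(1:ℤ_[p])‖ := by
          by_contra hne
          have hmax := PadicInt.nonarchimedean (1:ℤ_[p]) ((p:ℤ_[p]) ^ (if p = 2 then 2 else 1))
          have h3 := PadicInt.nonarchimedean ((1:ℤ_[p]) + (p:ℤ_[p]) ^ (if p = 2 then 2 else 1))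
            (-((p:ℤ_[p]) ^ (if p = 2 then 2 else 1)))
          simp only [add_neg_cancel_right, norm_neg] at h3
          rcases max_cases ‖(1:ℤ_[p]) + (p:ℤ_[p]) ^ (if p = 2 then 2 else 1)‖
              ‖(p:ℤ_[p]) ^ (if p = 2 then 2 else 1)‖ with ⟨he, _⟩ | ⟨he, hle⟩ <;> rw [he] at h3
          · exact hne (le_antisymm (hmax.trans (max_le le_rfl h1.le)) h3)
          · exact absurd (lt_of_le_of_lt h3 h1) (lt_irrefl _)
    _ = 1 := norm_one
  have hunit : IsUnit ((1 : ℤ_[p]) + (p:ℤ_[p]) ^ (if p = 2 then 2 else 1)) :=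
    PadicInt.isUnit_iff.mpr hnorm
  refine ⟨hunit.unit, ?_, hunit.unit_spec⟩
  rw [mem_U1_iff, hunit.unit_spec, map_add, map_one, map_pow]
  have : (PadicInt.toZModPow (p := p) (if p = 2 then 2 else 1)) (p:ℤ_[p]) ^ (if p = 2 then 2 else 1) = 0 := by
    rw [← map_pow]
    have : ((p:ℤ_[p]) ^ (if p = 2 then 2 else 1)) ∈ RingHom.ker (PadicInt.toZModPow (p := p)
        (if p = 2 then 2 else 1)) := by
      rw [PadicInt.ker_toZModPow]
      exact Ideal.mem_span_singleton_self _
    rwa [RingHom.mem_ker] at this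
  rw [this, add_zero]

lemma exists_phi (r : U1 p) (hr : Dense (Subgroup.zpowers r : Set (U1 p))) :
    ∃ φ : (U1 p) → ℤ_[p], Continuous φ ∧ (∀ a b : U1 p, φ (a * b) = φ a + φ b) ∧
      (∀ k : ℤ, φ (r ^ k) = (k : ℤ_[p])) := by
  classical
  set val1 : U1 p → ℤ_[p] := fun u => ((u : ℤ_[p]ˣ) : ℤ_[p]) with hval1
  have hval1c : Continuous val1 := Units.continuous_val.comp continuous_subtype_val
  set ρ : ℤ → ℤ_[p] := fun k => val1 (r ^ k) with hρdef
  have hρval : ∀ k : ℤ, ρ k = (((r : ℤ_[p]ˣ) ^ k : ℤ_[p]ˣ) : ℤ_[p]) := by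
    intro k
    show val1 (r ^ k) = _
    rw [hval1]
    norm_cast
  have hρu : ∀ k, ‖ρ k‖ = 1 := by intro k; rw [hρval]; exact PadicInt.norm_units _
  set c0 : ℝ := ‖val1 r - 1‖ with hc0def
  have hrle : ‖((r : ℤ_[p]ˣ) : ℤ_[p]) - 1‖ ≤ Cb p := norm_sub_one_of_mem r.2
  have hρnorm : ∀ a b : ℤ, ‖ρ a - ρ b‖ = ‖((a - b : ℤ) : ℤ_[p])‖ * c0 := by
    intro a b
    have hzp : ((r : ℤ_[p]ˣ)) ^ a = (r : ℤ_[p]ˣ) ^ b * (r : ℤ_[p]ˣ) ^ (a - b) := by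
      rw [← zpow_add]; congr 1; ring
    have hsplit : ρ a - ρ b = ρ b * ((((r:ℤ_[p]ˣ) ^ (a-b) : ℤ_[p]ˣ) : ℤ_[p]) - 1) := by
      rw [hρval a, hρval b, hzp, Units.val_mul]; ring
    rw [hsplit, norm_mul, hρu, one_mul, norm_zpow_sub_one _ hrle]
  have hmemK : ∀ u : U1 p, val1 u ∈ closure (Set.range ρ) := by
    intro u
    have h1 : u ∈ closure (Subgroup.zpowers r : Set (U1 p)) := hr _
    have h2 : val1 u ∈ val1 '' closure (Subgroup.zpowers r : Set (U1 p)) := ⟨u, h1, rfl⟩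
    have h3 := (image_closure_subset_closure_image hval1c) h2
    refine closure_mono ?_ h3
    rintro x ⟨z, hz, rfl⟩
    obtain ⟨k, rfl⟩ := Subgroup.mem_zpowers_iff.mp hz
    exact ⟨k, rfl⟩
  have hc0pos : 0 < c0 := by
    rcases (norm_nonneg (val1 r - 1)).lt_or_eq with h | h
    · exact h
    exfalso
    have hr1 : val1 r = 1 := by
      have h0 : ‖val1 r - 1‖ = 0 := h.symm
      have := norm_eq_zero.mp h0
      exact sub_eq_zero.mp this
    have hrr : r = 1 := by
      apply Subtype.ext
      apply Units.ext
      exact hr1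
    obtain ⟨v, hv, hveq⟩ := one_add_pow_mem (p := p)
    have hmem := hmemK ⟨v, hv⟩
    have hρ1 : Set.range ρ ⊆ {(1 : ℤ_[p])} := by
      rintro x ⟨k, rfl⟩
      rw [hρval k, hrr]
      simp
    have hcl : closure (Set.range ρ) ⊆ {(1:ℤ_[p])} :=
      closure_minimal hρ1 isClosed_singleton
    have hv1 : val1 ⟨v, hv⟩ = 1 := hcl hmem
    rw [hval1] at hv1
    simp only at hv1
    rw [hveq] at hv1
    have hpz : (p:ℤ_[p]) ^ (if p = 2 then 2 else 1) = 0 := by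
      have := congrArg (fun z => z - 1) hv1
      simpa using this
    have : (p:ℤ_[p]) ≠ 0 := by
      exact_mod_cast (Nat.cast_ne_zero (R := ℤ_[p])).mpr hp.1.ne_zero
    exact this (pow_eq_zero_iff (by split <;> omega)|>.mp hpz)
  have hρinj : ∀ a b : ℤ, ρ a = ρ b → ((a : ℤ_[p])) = (b : ℤ_[p]) := by
    intro a b hab
    have hn := hρnorm a b
    rw [hab, sub_self, norm_zero] at hn
    have h0 : ‖((a - b : ℤ) : ℤ_[p])‖ = 0 := by
      rcases mul_eq_zero.mp hn.symm with h | h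
      · exact h
      · exact absurd h hc0pos.ne'
    have h1 := norm_eq_zero.mp h0
    push_cast at h1
    exact sub_eq_zero.mp h1
  set S : Set ℤ_[p] := Set.range ρ with hS
  set K : Set ℤ_[p] := closure S with hK
  haveI : CompleteSpace K := isClosed_closure.completeSpace_coe
  set ι : S → K := fun s => ⟨s.1, subset_closure s.2⟩ with hι
  have hiso : Isometry ι := fun s t => rfl
  have hui : IsUniformInducing ι := hiso.isUniformInducing
  have hdr : DenseRange ι := by
    intro x
    rw [Metric.mem_closure_iff]
    intro ε hε
    obtain ⟨b, hb, hd⟩ := Metric.mem_closure_iff.mp x.2 ε hε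
    refine ⟨ι ⟨b, hb⟩, Set.mem_range_self _, ?_⟩
    rw [Subtype.dist_eq]
    exact hd
  set φ0 : S → ℤ_[p] := fun s => ((Classical.choose s.2 : ℤ) : ℤ_[p]) with hφ0
  have hφ0spec : ∀ (k : ℤ) (s : S), s.1 = ρ k → φ0 s = (k : ℤ_[p]) := by
    intro k s hs
    exact hρinj _ _ ((Classical.choose_spec s.2).trans hs)
  have hφ0uc : UniformContinuous φ0 := by
    rw [Metric.uniformContinuous_iff]
    intro ε hε
    refine ⟨c0 * ε, mul_pos hc0pos hε, ?_⟩
    intro s t hst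
    have ha : ρ (Classical.choose s.2) = s.1 := Classical.choose_spec s.2
    have hb : ρ (Classical.choose t.2) = t.1 := Classical.choose_spec t.2
    have hd : dist s t = ‖((Classical.choose s.2 - Classical.choose t.2 : ℤ) : ℤ_[p])‖ * c0 := by
      rw [Subtype.dist_eq, dist_eq_norm]
      calc ‖(s : ℤ_[p]) - (t : ℤ_[p])‖
          = ‖ρ (Classical.choose s.2) - ρ (Classical.choose t.2)‖ := by rw [ha, hb]
      _ = _ := hρnorm _ _
    rw [hd] at hst
    have hlt : ‖((Classical.choose s.2 - Classical.choose t.2 : ℤ) : ℤ_[p])‖ < ε := by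
      nlinarith [norm_nonneg ((Classical.choose s.2 - Classical.choose t.2 : ℤ) : ℤ_[p])]
    calc dist (φ0 s) (φ0 t)
        = ‖((Classical.choose s.2 : ℤ) : ℤ_[p]) - ((Classical.choose t.2 : ℤ) : ℤ_[p])‖ :=
          dist_eq_norm _ _
    _ = ‖((Classical.choose s.2 - Classical.choose t.2 : ℤ) : ℤ_[p])‖ := by push_cast; ring_nf
    _ < ε := hlt
  have hdi : IsDenseInducing ι := hui.isDenseInducing hdr
  set φK : K → ℤ_[p] := hdi.extend φ0 with hφK
  have hφKc : Continuous φK :=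
    (uniformContinuous_uniformly_extend hui hdr hφ0uc).continuous
  have hφKι : ∀ s : S, φK (ι s) = φ0 s := fun s => uniformly_extend_of_ind hui hdr hφ0uc s
  set φ : U1 p → ℤ_[p] := fun u => φK ⟨val1 u, hmemK u⟩ with hφ
  have hφc : Continuous φ := hφKc.comp (hval1c.subtype_mk hmemK)
  have hφzpow : ∀ k : ℤ, φ (r ^ k) = (k : ℤ_[p]) := by
    intro k
    have h1 : (⟨val1 (r ^ k), hmemK _⟩ : K) = ι ⟨ρ k, ⟨k, rfl⟩⟩ := rfl
    show φK ⟨val1 (r ^ k), hmemK _⟩ = _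
    rw [h1, hφKι]
    exact hφ0spec k _ rfl
  have hφmul : ∀ a b : U1 p, φ (a * b) = φ a + φ b := by
    have hdd : Dense ((Subgroup.zpowers r : Set (U1 p)) ×ˢ (Subgroup.zpowers r : Set (U1 p))) :=
      hr.prod hr
    have hfeq : (fun q : U1 p × U1 p => φ (q.1 * q.2)) = fun q => φ q.1 + φ q.2 := by
      refine Continuous.ext_on hdd ?_ ?_ ?_
      · exact hφc.comp continuous_mul
      · exact (hφc.comp continuous_fst).add (hφc.comp continuous_snd)
      · rintro ⟨u, v⟩ ⟨hu, hv⟩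
        obtain ⟨a, rfl⟩ := Subgroup.mem_zpowers_iff.mp hu
        obtain ⟨b, rfl⟩ := Subgroup.mem_zpowers_iff.mp hv
        show φ (r ^ a * r ^ b) = φ (r ^ a) + φ (r ^ b)
        rw [← zpow_add, hφzpow, hφzpow, hφzpow]
        push_cast; ring
    intro a b
    exact congrFun hfeq (a, b)
  exact ⟨φ, hφc, hφmul, hφzpow⟩

lemma isOpen_pre (m : ℕ) (T : Set (ZMod (p ^ m))) :
    IsOpen {x : ℤ_[p] | PadicInt.toZModPow m x ∈ T} := by
  rw [Metric.isOpen_iff]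
  intro x hx
  refine ⟨(p:ℝ) ^ (-(m:ℤ)), ?_, ?_⟩
  · have : (0:ℝ) < p := by exact_mod_cast hp.1.pos
    positivity
  · intro y hy
    rw [Metric.mem_ball] at hy
    show PadicInt.toZModPow m y ∈ T
    rw [locally_const m x y hy]
    exact hx



end Stmt10Aux

/-- Let `p ≠ ℓ` be primes and write `ℓ = ω · r^{p^n}` in `ℤ_pˣ` with `ω` a torsion unit
(`ω^{p-1} = 1` for odd `p`, `ω = ±1` for `p = 2`), `n : ℕ`, and `r` a topological
generator of `U₁`.  Then the image of the evaluation map `ψ ↦ ψ(ℓ)`, from continuous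
group homomorphisms `ℤ_pˣ → (ℤ_p, +)` to `ℤ_p`, is exactly `p^n · ℤ_p`; in particular the
cokernel of the evaluation map is cyclic of order `p^n`. -/
theorem stmt10 (p ℓ : ℕ) [Fact p.Prime] (hℓ : ℓ.Prime) (hne : ℓ ≠ p)
    (ω : ℤ_[p]ˣ) (hω₁ : p ≠ 2 → ω ^ (p - 1) = 1) (hω₂ : p = 2 → ω = 1 ∨ ω = -1)
    (n : ℕ) (r : U1 p)
    (hr : Dense (Subgroup.zpowers r : Set (U1 p)))
    (hfac : (ℓ : ℤ_[p]) = ((ω * (r : ℤ_[p]ˣ) ^ (p ^ n) : ℤ_[p]ˣ) : ℤ_[p])) :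
    (∀ y : ℤ_[p],
      (∃ ψ : ℤ_[p]ˣ → ℤ_[p], Continuous ψ ∧ (∀ a b : ℤ_[p]ˣ, ψ (a * b) = ψ a + ψ b) ∧
        ψ (ω * (r : ℤ_[p]ˣ) ^ (p ^ n)) = y) ↔ (p : ℤ_[p]) ^ n ∣ y) ∧
    Nonempty ((ℤ_[p] ⧸ Ideal.span {(p : ℤ_[p]) ^ n}) ≃+ ZMod (p ^ n)) := by
  classical
  have hp := ‹Fact p.Prime›
  constructor
  · intro y
    constructor
    · -- forward: any ψ has value divisible by p^n
      rintro ⟨ψ, hcont, hadd, hval⟩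
      have hψ1 : ψ 1 = 0 := by
        have h := hadd 1 1
        rw [mul_one] at h
        exact (left_eq_add.mp h)
      have hpow : ∀ (u : ℤ_[p]ˣ) (m : ℕ), ψ (u ^ m) = (m : ℤ_[p]) * ψ u := by
        intro u m
        induction m with
        | zero => simpa using hψ1
        | succ m ih =>
          rw [pow_succ, hadd, ih]
          push_cast
          ring
      have hω0 : ψ ω = 0 := by
        by_cases hp2 : p = 2
        · rcases hω₂ hp2 with rfl | rfl
          · exact hψ1
          · have h2 : ((-1 : ℤ_[p]ˣ)) ^ 2 = 1 := by
              rw [neg_one_sq]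
            have h := hpow (-1) 2
            rw [h2, hψ1] at h
            have h2ne : ((2:ℕ) : ℤ_[p]) ≠ 0 := Nat.cast_ne_zero.mpr two_ne_zero
            rcases mul_eq_zero.mp h.symm with hc | hc
            · exact absurd hc h2ne
            · exact hc
        · have hq := hω₁ hp2
          have h := hpow ω (p - 1)
          rw [hq, hψ1] at h
          have hne' : ((p - 1 : ℕ) : ℤ_[p]) ≠ 0 :=
            Nat.cast_ne_zero.mpr (by have := hp.1.two_le; omega)
          rcases mul_eq_zero.mp h.symm with hc | hc
          · exact absurd hc hne'
          · exact hc
      have hsplit : y = ((p ^ n : ℕ) : ℤ_[p]) * ψ ((r : ℤ_[p]ˣ)) := by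
        rw [← hval, hadd, hω0, zero_add, hpow]
      exact ⟨ψ (r : ℤ_[p]ˣ), by rw [hsplit]; push_cast; ring⟩
    · -- backward: construct ψ
      rintro ⟨c, rfl⟩
      obtain ⟨φ, hφc, hφmul, hφzpow⟩ := Stmt10Aux.exists_phi r hr
      have hφpow : ∀ m : ℕ, φ (r ^ m) = (m : ℤ_[p]) := by
        intro m
        have h := hφzpow (m : ℤ)
        rw [zpow_natCast] at h
        rw [h]
        push_cast
        ring
      by_cases hp2 : p = 2
      · subst hp2
        -- sign projection
        have hvalpm : ∀ u : ℤ_[2]ˣ,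
            PadicInt.toZModPow (if 2 = 2 then 2 else 1) (u : ℤ_[2]) = 1 ∨
            PadicInt.toZModPow (if 2 = 2 then 2 else 1) (u : ℤ_[2]) = -1 := by
          intro u
          have hd : ∀ t : (ZMod (2 ^ (if 2 = 2 then 2 else 1)))ˣ,
              (t : ZMod (2 ^ (if 2 = 2 then 2 else 1))) = 1 ∨
              (t : ZMod (2 ^ (if 2 = 2 then 2 else 1))) = -1 := by decide
          exact hd (Units.map ((PadicInt.toZModPow (if 2 = 2 then 2 else 1) :
            ℤ_[2] →+* ZMod (2 ^ (if 2 = 2 then 2 else 1))) :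
            ℤ_[2] →* ZMod (2 ^ (if 2 = 2 then 2 else 1))) u)
        have hne1 : ((-1 : ZMod (2 ^ (if 2 = 2 then 2 else 1)))) ≠ 1 := by decide
        have hnegmem : ∀ u : ℤ_[2]ˣ, u ∉ U1 2 → (-u) ∈ U1 2 := by
          intro u hu
          rw [Stmt10Aux.mem_U1_iff] at hu ⊢
          rcases hvalpm u with h | h
          · exact absurd h hu
          · rw [Units.val_neg, map_neg, h, neg_neg]
        have hnotmem_val : ∀ u : ℤ_[2]ˣ, u ∉ U1 2 →
            PadicInt.toZModPow (if 2 = 2 then 2 else 1) (u : ℤ_[2]) = -1 := by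
          intro u hu
          rw [Stmt10Aux.mem_U1_iff] at hu
          rcases hvalpm u with h | h
          · exact absurd h hu
          · exact h
        -- g : sign-normalized unit
        set g : ℤ_[2]ˣ → ℤ_[2]ˣ := fun u => if u ∈ U1 2 then u else -u with hg
        have hgmem : ∀ u, g u ∈ U1 2 := by
          intro u
          show (if u ∈ U1 2 then u else -u) ∈ U1 2
          split
          · assumption
          · exact hnegmem u (by assumption)
        have hmulmem : ∀ a b : ℤ_[2]ˣ, a ∉ U1 2 → b ∉ U1 2 → a * b ∈ U1 2 := by
          intro a b ha hb
          rw [Stmt10Aux.mem_U1_iff, Units.val_mul, map_mul, hnotmem_val a ha, hnotmem_val b hb,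
            neg_mul_neg, one_mul]
        have hmulnotmem : ∀ a b : ℤ_[2]ˣ, a ∈ U1 2 → b ∉ U1 2 → a * b ∉ U1 2 := by
          intro a b ha hb hab
          rw [Stmt10Aux.mem_U1_iff] at ha hb hab
          rw [Units.val_mul, map_mul, ha, one_mul] at hab
          exact hb hab
        have hghom : ∀ a b, g (a * b) = g a * g b := by
          intro a b
          show (if a * b ∈ U1 2 then a * b else -(a*b)) =
            (if a ∈ U1 2 then a else -a) * (if b ∈ U1 2 then b else -b)
          by_cases ha : a ∈ U1 2 <;> by_cases hb : b ∈ U1 2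
          · rw [if_pos ((U1 2).mul_mem ha hb), if_pos ha, if_pos hb]
          · rw [if_neg (hmulnotmem a b ha hb), if_pos ha, if_neg hb, mul_neg]
          · have : b * a ∉ U1 2 := hmulnotmem b a hb ha
            have hba : a * b ∉ U1 2 := by rwa [mul_comm b a] at this
            rw [if_neg hba, if_neg ha, if_pos hb, neg_mul]
          · rw [if_pos (hmulmem a b ha hb), if_neg ha, if_neg hb, neg_mul_neg]
        have hgcont : Continuous g := by
          have hsetopen : IsOpen {u : ℤ_[2]ˣ | u ∈ U1 2} := by
            have h1 := Stmt10Aux.isOpen_pre (p := 2) (if 2 = 2 then 2 else 1)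
              {(1 : ZMod (2 ^ (if 2 = 2 then 2 else 1)))}
            have h2 : {u : ℤ_[2]ˣ | u ∈ U1 2} = Units.val ⁻¹'
                {x : ℤ_[2] | PadicInt.toZModPow (if 2 = 2 then 2 else 1) x ∈
                  ({(1 : ZMod (2 ^ (if 2 = 2 then 2 else 1)))} : Set _)} := by
              ext u
              simp only [Set.mem_setOf_eq, Set.mem_preimage, Set.mem_singleton_iff]
              exact Stmt10Aux.mem_U1_iff u
            rw [h2]
            exact h1.preimage Units.continuous_val
          have hsetclosed : IsClosed {u : ℤ_[2]ˣ | u ∈ U1 2} := by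
            rw [← isOpen_compl_iff]
            have h1 := Stmt10Aux.isOpen_pre (p := 2) (if 2 = 2 then 2 else 1)
              {(1 : ZMod (2 ^ (if 2 = 2 then 2 else 1)))}ᶜ
            have h2 : {u : ℤ_[2]ˣ | u ∈ U1 2}ᶜ = Units.val ⁻¹'
                {x : ℤ_[2] | PadicInt.toZModPow (if 2 = 2 then 2 else 1) x ∈
                  ({(1 : ZMod (2 ^ (if 2 = 2 then 2 else 1)))} : Set _)ᶜ} := by
              ext u
              simp only [Set.mem_compl_iff, Set.mem_setOf_eq, Set.mem_preimage,
                Set.mem_singleton_iff]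
              rw [Stmt10Aux.mem_U1_iff]
            rw [h2]
            exact h1.preimage Units.continuous_val
          have hfr : frontier {u : ℤ_[2]ˣ | u ∈ U1 2} = ∅ :=
            IsClopen.frontier_eq ⟨hsetclosed, hsetopen⟩
          rw [hg]
          refine Continuous.if ?_ continuous_id ?_
          · intro a ha
            rw [hfr] at ha
            exact absurd ha (Set.notMem_empty a)
          · have hc1 : Continuous (fun u : ℤ_[2]ˣ => (-1) * u) :=
              continuous_const.mul continuous_id
            exact hc1.congr (fun x => neg_one_mul x)
        set π : ℤ_[2]ˣ → U1 2 := fun u => ⟨g u, hgmem u⟩ with hπ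
        have hπhom : ∀ a b, π (a * b) = π a * π b := by
          intro a b
          apply Subtype.ext
          show g (a * b) = g a * g b
          exact hghom a b
        have hπcont : Continuous π := hgcont.subtype_mk hgmem
        refine ⟨fun u => c * φ (π u), ?_, ?_, ?_⟩
        · exact continuous_const.mul (hφc.comp hπcont)
        · intro a b
          show c * φ (π (a * b)) = c * φ (π a) + c * φ (π b)
          rw [hπhom, hφmul]
          ring
        · -- value
          have hπω : π ω = 1 := by
            rcases hω₂ rfl with rfl | rfl
            · apply Subtype.ext
              show (if (1:ℤ_[2]ˣ) ∈ U1 2 then (1:ℤ_[2]ˣ) else -1) = 1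
              rw [if_pos (one_mem (U1 2))]
            · apply Subtype.ext
              have hnm : (-1 : ℤ_[2]ˣ) ∉ U1 2 := by
                rw [Stmt10Aux.mem_U1_iff]
                intro h
                rw [Units.val_neg, Units.val_one, map_neg, map_one] at h
                exact hne1 h
              show (if (-1:ℤ_[2]ˣ) ∈ U1 2 then (-1:ℤ_[2]ˣ) else -(-1)) = 1
              rw [if_neg hnm, neg_neg]
          have hπr : π ((r : ℤ_[2]ˣ) ^ (2 ^ n)) = r ^ (2 ^ n) := by
            apply Subtype.ext
            have hmem : ((r : ℤ_[2]ˣ) ^ (2 ^ n)) ∈ U1 2 := by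
              have := (r ^ (2 ^ n) : U1 2).2
              rwa [SubmonoidClass.coe_pow] at this
            show (if ((r : ℤ_[2]ˣ) ^ (2 ^ n)) ∈ U1 2 then ((r : ℤ_[2]ˣ) ^ (2 ^ n))
              else -((r : ℤ_[2]ˣ) ^ (2 ^ n))) = _
            rw [if_pos hmem]
            rw [SubmonoidClass.coe_pow]
          show c * φ (π (ω * (r : ℤ_[2]ˣ) ^ (2 ^ n))) = _
          rw [hπhom, hπω, one_mul, hπr, hφpow]
          push_cast
          ring
      · -- p odd
        set q := p - 1 with hq
        have hqpos : 0 < q := by have := hp.1.two_le; omega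
        have hpndvd : ¬ p ∣ q := by
          intro h
          have := Nat.le_of_dvd hqpos h
          have := hp.1.two_le
          omega
        have hwunit : IsUnit ((q : ℕ) : ℤ_[p]) :=
          PadicInt.isUnit_iff.mpr (Stmt10Aux.norm_natCast_coprime hpndvd)
        set w := hwunit.unit with hw
        have htot : Nat.totient (p ^ (if p = 2 then 2 else 1)) = q := by
          rw [if_neg hp2, pow_one, Nat.totient_prime hp.1]
        have hmemq : ∀ u : ℤ_[p]ˣ, u ^ q ∈ U1 p := by
          intro u
          rw [U1, MonoidHom.mem_ker, map_pow, ← htot]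
          exact ZMod.pow_totient _
        refine ⟨fun u => c * ((w⁻¹ : ℤ_[p]ˣ) : ℤ_[p]) * φ ⟨u ^ q, hmemq u⟩, ?_, ?_, ?_⟩
        · exact continuous_const.mul (hφc.comp ((continuous_pow q).subtype_mk hmemq))
        · intro a b
          have hsub : (⟨(a * b) ^ q, hmemq _⟩ : U1 p) = ⟨a ^ q, hmemq a⟩ * ⟨b ^ q, hmemq b⟩ := by
            apply Subtype.ext
            show (a * b) ^ q = a ^ q * b ^ q
            rw [mul_pow]
          show c * ((w⁻¹ : ℤ_[p]ˣ) : ℤ_[p]) * φ ⟨(a * b) ^ q, hmemq _⟩ =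
            c * ((w⁻¹ : ℤ_[p]ˣ) : ℤ_[p]) * φ ⟨a ^ q, hmemq a⟩ +
            c * ((w⁻¹ : ℤ_[p]ˣ) : ℤ_[p]) * φ ⟨b ^ q, hmemq b⟩
          rw [hsub, hφmul]
          ring
        · -- value
          have hωq : ω ^ q = 1 := hω₁ hp2
          have hsub : (⟨(ω * (r : ℤ_[p]ˣ) ^ (p ^ n)) ^ q, hmemq _⟩ : U1 p)
              = r ^ (p ^ n * q) := by
            apply Subtype.ext
            show (ω * (r : ℤ_[p]ˣ) ^ (p ^ n)) ^ q = ((r ^ (p ^ n * q) : U1 p) : ℤ_[p]ˣ)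
            rw [mul_pow, hωq, one_mul, ← pow_mul, SubmonoidClass.coe_pow]
          show c * ((w⁻¹ : ℤ_[p]ˣ) : ℤ_[p]) * φ ⟨(ω * (r : ℤ_[p]ˣ) ^ (p ^ n)) ^ q, hmemq _⟩ = _
          rw [hsub, hφpow]
          have hwv : ((w : ℤ_[p]ˣ) : ℤ_[p]) = ((q : ℕ) : ℤ_[p]) := hwunit.unit_spec
          have hinv : ((w⁻¹ : ℤ_[p]ˣ) : ℤ_[p]) * ((q : ℕ) : ℤ_[p]) = 1 := by
            rw [← hwv]
            exact_mod_cast Units.inv_mul w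
          push_cast
          calc c * ((w⁻¹ : ℤ_[p]ˣ) : ℤ_[p]) * ((p : ℤ_[p]) ^ n * (q : ℤ_[p]))
              = (p : ℤ_[p]) ^ n * c * (((w⁻¹ : ℤ_[p]ˣ) : ℤ_[p]) * ((q : ℕ) : ℤ_[p])) := by
                push_cast
                ring
          _ = (p : ℤ_[p]) ^ n * c := by rw [hinv, mul_one]
  · -- part 2
    have hsurj : Function.Surjective (PadicInt.toZModPow (p := p) n) :=
      ZMod.ringHom_surjective _
    have hker : RingHom.ker (PadicInt.toZModPow (p := p) n) = Ideal.span {(p : ℤ_[p]) ^ n} :=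
      PadicInt.ker_toZModPow n
    have e := RingHom.quotientKerEquivOfSurjective hsurj
    exact ⟨((Ideal.quotEquivOfEq hker.symm).trans e).toAddEquiv⟩
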